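/- Let Θ(C) = D(L)^{-1} L where L = chol(C) is the lower Cholesky factor of a full-rank correlation matrix C and D(L) is the diagonal part of L. Then Θ(C) is lower triangular with unit diagonal, and its inverse map is K ↦ Cor(K Kᵀ): that is, Cor(Θ(C) Θ(C)ᵀ) = C for all full-rank correlation matrices C, and Θ(Cor(K Kᵀ)) = K for all lower triangular K with unit diagonal. -/

import Mathlib

open Matrix

/-- `Cor(Σ) = D(Σ)^{-1/2} Σ D(Σ)^{-1/2}`. -/
noncomputable def cor {n : ℕ} (S : Matrix (Fin n) (Fin n) ℝ) :
    Matrix (Fin n) (Fin n) ℝ :=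
  (Matrix.diagonal fun i => (Real.sqrt (S i i))⁻¹) * S *
    (Matrix.diagonal fun i => (Real.sqrt (S i i))⁻¹)

/-- `Θ` applied to a Cholesky factor `L`: `D(L)⁻¹ L`. -/
noncomputable def theta {n : ℕ} (L : Matrix (Fin n) (Fin n) ℝ) :
    Matrix (Fin n) (Fin n) ℝ :=
  (Matrix.diagonal fun i => L i i)⁻¹ * L

private lemma diag_inv' {n : ℕ} (v : Fin n → ℝ) (hv : ∀ i, v i ≠ 0) :
    (Matrix.diagonal v)⁻¹ = Matrix.diagonal (fun i => (v i)⁻¹) :=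
  Matrix.inv_eq_right_inv (by
    have h1 : (fun i => v i * (v i)⁻¹) = fun _ : Fin n => (1:ℝ) :=
      funext fun i => mul_inv_cancel₀ (hv i)
    rw [Matrix.diagonal_mul_diagonal, h1, Matrix.diagonal_one])

private lemma chol_unique {n : ℕ} (A B : Matrix (Fin n) (Fin n) ℝ)
    (hAlow : ∀ i j, i < j → A i j = 0) (hAd : ∀ i, 0 < A i i)
    (hBlow : ∀ i j, i < j → B i j = 0) (hBd : ∀ i, 0 < B i i)
    (h : A * Aᵀ = B * Bᵀ) : A = B := by
  have hAt : Aᵀ.BlockTriangular id := fun i j hij => hAlow j i hij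
  have hBt : Bᵀ.BlockTriangular id := fun i j hij => hBlow j i hij
  have hdA : IsUnit A.det := by
    rw [← Matrix.det_transpose, Matrix.det_of_upperTriangular hAt]
    exact isUnit_iff_ne_zero.2 (Finset.prod_pos (fun i _ => hAd i)).ne'
  have hdB : IsUnit B.det := by
    rw [← Matrix.det_transpose, Matrix.det_of_upperTriangular hBt]
    exact isUnit_iff_ne_zero.2 (Finset.prod_pos (fun i _ => hBd i)).ne'
  have hdAt : IsUnit Aᵀ.det := by rwa [Matrix.det_transpose]
  have hdBt : IsUnit Bᵀ.det := by rwa [Matrix.det_transpose]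
  haveI := Aᵀ.invertibleOfIsUnitDet hdAt
  haveI := Bᵀ.invertibleOfIsUnitDet hdBt
  set U := B⁻¹ * A with hUdef
  have h1 : U * Aᵀ = Bᵀ := by
    rw [hUdef, Matrix.mul_assoc, h, ← Matrix.mul_assoc, Matrix.nonsing_inv_mul _ hdB,
      Matrix.one_mul]
  have hU2 : U = Bᵀ * (Aᵀ)⁻¹ := by
    rw [← h1, Matrix.mul_assoc, Matrix.mul_nonsing_inv _ hdAt, Matrix.mul_one]
  have hUupper : U.BlockTriangular id := by
    rw [hU2]
    exact hBt.mul (Matrix.blockTriangular_inv_of_blockTriangular hAt)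
  have hUlower : Uᵀ.BlockTriangular id := by
    have : Uᵀ = Aᵀ * (Bᵀ)⁻¹ := by
      rw [hUdef, Matrix.transpose_mul, Matrix.transpose_nonsing_inv]
    rw [this]
    exact hAt.mul (Matrix.blockTriangular_inv_of_blockTriangular hBt)
  have hUoff : ∀ i j, i ≠ j → U i j = 0 := by
    intro i j hij
    rcases lt_or_gt_of_ne hij with hlt | hgt
    · exact hUlower hlt
    · exact hUupper hgt
  have hBU : B * U = A := by
    rw [hUdef, ← Matrix.mul_assoc, Matrix.mul_nonsing_inv _ hdB, Matrix.one_mul]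
  have hUdiagval : ∀ i, B i i * U i i = A i i := by
    intro i
    have := congrFun (congrFun hBU i) i
    rw [Matrix.mul_apply] at this
    rwa [Finset.sum_eq_single i (fun k _ hk => by rw [hUoff k i hk, mul_zero])
      (fun hi => absurd (Finset.mem_univ i) hi)] at this
  have hUUt : U * Uᵀ = 1 := by
    have hUt : Uᵀ = Aᵀ * (Bᵀ)⁻¹ := by
      rw [hUdef, Matrix.transpose_mul, Matrix.transpose_nonsing_inv]
    rw [hUt, hU2, Matrix.mul_assoc, ← Matrix.mul_assoc (Aᵀ)⁻¹,
      Matrix.nonsing_inv_mul _ hdAt, Matrix.one_mul, Matrix.mul_nonsing_inv _ hdBt]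
  have hUsq : ∀ i, U i i * U i i = 1 := by
    intro i
    have := congrFun (congrFun hUUt i) i
    rw [Matrix.mul_apply] at this
    rw [Finset.sum_eq_single i (fun k _ hk => by
        rw [Matrix.transpose_apply, hUoff i k (Ne.symm hk), zero_mul])
      (fun hi => absurd (Finset.mem_univ i) hi)] at this
    simpa using this
  have hUone : ∀ i, U i i = 1 := by
    intro i
    have hpos : 0 < U i i := by
      have := hUdiagval i
      nlinarith [hBd i, hAd i]
    nlinarith [hUsq i]
  have hUeq : U = 1 := by
    ext i j
    rcases eq_or_ne i j with rfl | hij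
    · simp [hUone i]
    · simp [hUoff i j hij, Matrix.one_apply_ne hij]
  rw [← hBU, hUeq, Matrix.mul_one]

private lemma diag_mul_diag_inv {n : ℕ} (v : Fin n → ℝ) (hv : ∀ i, v i ≠ 0) :
    Matrix.diagonal v * Matrix.diagonal (fun i => (v i)⁻¹) = 1 := by
  have h1 : (fun i => v i * (v i)⁻¹) = fun _ : Fin n => (1:ℝ) :=
    funext fun i => mul_inv_cancel₀ (hv i)
  rw [Matrix.diagonal_mul_diagonal, h1, Matrix.diagonal_one]

private lemma diag_inv_mul_diag {n : ℕ} (v : Fin n → ℝ) (hv : ∀ i, v i ≠ 0) :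
    Matrix.diagonal (fun i => (v i)⁻¹) * Matrix.diagonal v = 1 := by
  have h1 : (fun i => (v i)⁻¹ * v i) = fun _ : Fin n => (1:ℝ) :=
    funext fun i => inv_mul_cancel₀ (hv i)
  rw [Matrix.diagonal_mul_diagonal, h1, Matrix.diagonal_one]

/-- for a full-rank correlation matrix `C` with lower Cholesky
factor `L` (lower triangular, positive diagonal, `C = L Lᵀ`), the matrix
`Θ(C) = D(L)⁻¹ L` is lower triangular with unit diagonal, and `K ↦ Cor(K Kᵀ)`
is inverse to `Θ`: `Cor(Θ(C) Θ(C)ᵀ) = C`, and for every lower triangular `K`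
with unit diagonal, the `Θ` of `Cor(K Kᵀ)` (computed from its Cholesky factor)
equals `K`. -/
theorem theta_unit_lower_triangular_and_inverse {n : ℕ}
    (C L : Matrix (Fin n) (Fin n) ℝ)
    (hC : C.PosDef) (hCdiag : ∀ i : Fin n, C i i = 1)
    (hLlow : ∀ i j : Fin n, i < j → L i j = 0)
    (hLdiag : ∀ i : Fin n, 0 < L i i)
    (hfac : C = L * Lᵀ) :
    ((∀ i j : Fin n, i < j → theta L i j = 0) ∧ ∀ i : Fin n, theta L i i = 1) ∧
      cor (theta L * (theta L)ᵀ) = C ∧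
      (∀ K L' : Matrix (Fin n) (Fin n) ℝ,
        (∀ i j : Fin n, i < j → K i j = 0) → (∀ i : Fin n, K i i = 1) →
        (∀ i j : Fin n, i < j → L' i j = 0) → (∀ i : Fin n, 0 < L' i i) →
        cor (K * Kᵀ) = L' * L'ᵀ →
        theta L' = K) := by
  have hLne : ∀ i : Fin n, L i i ≠ 0 := fun i => (hLdiag i).ne'
  have hT : theta L = Matrix.diagonal (fun i => (L i i)⁻¹) * L := by
    rw [theta, diag_inv' _ hLne]
  refine ⟨⟨?_, ?_⟩, ?_, ?_⟩
  · intro i j hij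
    rw [hT, Matrix.diagonal_mul, hLlow i j hij, mul_zero]
  · intro i
    rw [hT, Matrix.diagonal_mul, inv_mul_cancel₀ (hLne i)]
  · -- cor (theta L * (theta L)ᵀ) = C
    have hS : theta L * (theta L)ᵀ =
        Matrix.diagonal (fun i => (L i i)⁻¹) * C * Matrix.diagonal (fun i => (L i i)⁻¹) := by
      rw [hT, Matrix.transpose_mul, Matrix.diagonal_transpose, hfac]
      simp only [Matrix.mul_assoc]
    have hSdiag : ∀ i, (theta L * (theta L)ᵀ) i i = (L i i)⁻¹ * (L i i)⁻¹ := by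
      intro i
      rw [hS, Matrix.mul_diagonal, Matrix.diagonal_mul, hCdiag i, mul_one]
    have hsq : (fun i => (Real.sqrt ((theta L * (theta L)ᵀ) i i))⁻¹) =
        fun i => L i i := by
      funext i
      rw [hSdiag i, Real.sqrt_mul_self (inv_nonneg.2 (hLdiag i).le), inv_inv]
    rw [cor, hsq, hS]
    calc Matrix.diagonal (fun i => L i i) *
          (Matrix.diagonal (fun i => (L i i)⁻¹) * C * Matrix.diagonal (fun i => (L i i)⁻¹)) *
          Matrix.diagonal (fun i => L i i)
        = (Matrix.diagonal (fun i => L i i) * Matrix.diagonal (fun i => (L i i)⁻¹)) * C *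
          (Matrix.diagonal (fun i => (L i i)⁻¹) * Matrix.diagonal (fun i => L i i)) := by
          simp only [Matrix.mul_assoc]
      _ = C := by
          rw [diag_mul_diag_inv _ hLne, diag_inv_mul_diag _ hLne, Matrix.one_mul,
            Matrix.mul_one]
  · -- inverse direction
    intro K L' hKlow hKdiag hL'low hL'diag hcor
    have hgpos : ∀ i, 0 < (K * Kᵀ) i i := by
      intro i
      have : (K * Kᵀ) i i = ∑ j, K i j * K i j := by
        simp [Matrix.mul_apply]
      rw [this]
      exact Finset.sum_pos' (fun j _ => mul_self_nonneg _)
        ⟨i, Finset.mem_univ i, by rw [hKdiag i]; norm_num⟩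
    set d : Fin n → ℝ := fun i => Real.sqrt ((K * Kᵀ) i i) with hd
    have hdpos : ∀ i, 0 < d i := fun i => Real.sqrt_pos.2 (hgpos i)
    have hdne : ∀ i, d i ≠ 0 := fun i => (hdpos i).ne'
    set M : Matrix (Fin n) (Fin n) ℝ := Matrix.diagonal (fun i => (d i)⁻¹) * K with hM
    have hMM : M * Mᵀ = L' * L'ᵀ := by
      rw [← hcor, cor, hM, Matrix.transpose_mul, Matrix.diagonal_transpose]
      simp only [Matrix.mul_assoc]
      rfl
    have hMlow : ∀ i j : Fin n, i < j → M i j = 0 := by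
      intro i j hij
      rw [hM, Matrix.diagonal_mul, hKlow i j hij, mul_zero]
    have hMii : ∀ i, M i i = (d i)⁻¹ := by
      intro i
      rw [hM, Matrix.diagonal_mul, hKdiag i, mul_one]
    have hMdiag : ∀ i, 0 < M i i := by
      intro i
      rw [hMii i]
      exact inv_pos.2 (hdpos i)
    have hML' : M = L' := chol_unique M L' hMlow hMdiag hL'low hL'diag hMM
    rw [← hML', theta]
    have h2 : (fun i => M i i) = fun i => (d i)⁻¹ := funext hMii
    rw [h2, diag_inv' _ (fun i => inv_ne_zero (hdne i))]
    have h3 : (fun i => ((d i)⁻¹)⁻¹) = d := funext fun i => inv_inv _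
    rw [h3, hM, ← Matrix.mul_assoc, diag_mul_diag_inv _ hdne, Matrix.one_mul]
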